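/- Let f : (0,1) → ℝ be convex on (0, 1/2], concave on [1/2, 1), and satisfy f(x) = -f(1-x) for all x ∈ (0,1). Then for all x, y ∈ (0,1) with x + y < 1, f(x) + f(y) ≥ 2·f((x+y)/2). -/
import Mathlib

open Set

/-- Key lemma: if `f` is convex on `(0,1/2]` with `f(1/2)=0`, then for
`0 < x < b < 1/2` we have `2 f((x+(1-b))/2) ≤ f x - f b`. -/
lemma key_lemma (f : ℝ → ℝ)
    (hconv : ConvexOn ℝ (Set.Ioc (0:ℝ) (1/2)) f)
    (hhalf : f (1/2) = 0)
    (x b : ℝ) (hx : 0 < x) (hxb : x < b) (hb : b < 1/2) :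
    2 * f ((x + (1 - b)) / 2) ≤ f x - f b := by
  set m : ℝ := (x + (1 - b)) / 2 with hm
  have hxm : x < m := by simp only [hm]; linarith
  have hm2 : m < 1/2 := by simp only [hm]; linarith
  have hxmem : x ∈ Set.Ioc (0:ℝ) (1/2) := ⟨hx, by linarith⟩
  have hbmem : b ∈ Set.Ioc (0:ℝ) (1/2) := ⟨by linarith, by linarith⟩
  have hmmem : m ∈ Set.Ioc (0:ℝ) (1/2) := ⟨by linarith, by linarith⟩
  have hhmem : (1/2 : ℝ) ∈ Set.Ioc (0:ℝ) (1/2) := ⟨by norm_num, le_refl _⟩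
  have hbx : b - x = 2 * (1/2 - m) := by simp only [hm]; ring
  rcases lt_trichotomy b m with h | h | h
  · -- x < b < m < 1/2
    have S1 := hconv.slope_mono_adjacent hxmem hmmem hxb h
    have S2 := hconv.slope_mono_adjacent hbmem hhmem h hm2
    rw [hhalf] at S2
    have hbx0 : (0:ℝ) < b - x := by linarith
    have hmb : (0:ℝ) < m - b := by linarith
    have hhm : (0:ℝ) < 1/2 - m := by linarith
    rw [div_le_div_iff₀ hbx0 hmb] at S1
    rw [div_le_div_iff₀ hmb hhm] at S2
    have S1' : (f b - f x) * (m - b) ≤ (f m - f b) * (2 * (1/2 - m)) := by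
      rw [← hbx]; exact S1
    have h3 : (2 * f m - (f x - f b)) * (m - b) ≤ 0 * (m - b) := by
      rw [zero_mul]; nlinarith [S1', S2]
    have := le_of_mul_le_mul_right h3 hmb
    linarith
  · -- b = m
    have S := hconv.slope_mono_adjacent hxmem hhmem hxm hm2
    rw [hhalf] at S
    have hmx : (0:ℝ) < m - x := by linarith
    have hhm : (0:ℝ) < 1/2 - m := by linarith
    rw [div_le_div_iff₀ hmx hhm] at S
    have hmx2 : m - x = 2 * (1/2 - m) := by rw [← h] at hbx ⊢; linarith
    have S' : (f m - f x) * (1/2 - m) ≤ (0 - f m) * (2 * (1/2 - m)) := by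
      rw [← hmx2]; exact S
    have h3 : (2 * f m - (f x - f b)) * (1/2 - m) ≤ 0 * (1/2 - m) := by
      rw [zero_mul, h]; nlinarith [S']
    have := le_of_mul_le_mul_right h3 hhm
    linarith
  · -- x < m < b < 1/2
    have S1 := hconv.slope_mono_adjacent hxmem hbmem hxm h
    have S2 := hconv.slope_mono_adjacent hmmem hhmem h hb
    rw [hhalf] at S2
    have hmx : (0:ℝ) < m - x := by linarith
    have hbm : (0:ℝ) < b - m := by linarith
    have hhb : (0:ℝ) < 1/2 - b := by linarith
    rw [div_le_div_iff₀ hmx hbm] at S1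
    rw [div_le_div_iff₀ hbm hhb] at S2
    set c : ℝ := 1/2 - b with hc
    set d : ℝ := 1/2 - m with hd
    have hdc : b - m = d - c := by simp only [hc, hd]; ring
    have hmxcd : m - x = d + c := by simp only [hd, hc]; linarith [hbx]
    have S1' : (f m - f x) * (d - c) ≤ (f b - f m) * (d + c) := by
      rw [← hdc, ← hmxcd]; exact S1
    have S2' : (f b - f m) * c ≤ (0 - f b) * (d - c) := by
      rw [← hdc]; exact S2
    have h3 : (2 * f m - (f x - f b)) * (d - c) ≤ 0 * (d - c) := by
      rw [zero_mul]; nlinarith [S1', S2']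
    have hdc0 : (0:ℝ) < d - c := by rw [← hdc]; linarith
    have := le_of_mul_le_mul_right h3 hdc0
    linarith

theorem midpoint_inequality_convex_concave_antisym
    (f : ℝ → ℝ)
    (hconv : ConvexOn ℝ (Set.Ioc (0:ℝ) (1/2)) f)
    (hconc : ConcaveOn ℝ (Set.Ico (1/2 : ℝ) 1) f)
    (hanti : ∀ x ∈ Set.Ioo (0:ℝ) 1, f x = -f (1 - x))
    (x y : ℝ) (hx : x ∈ Set.Ioo (0:ℝ) 1) (hy : y ∈ Set.Ioo (0:ℝ) 1)
    (hxy : x + y < 1) :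
    2 * f ((x + y) / 2) ≤ f x + f y := by
  obtain ⟨hx0, hx1⟩ := hx
  obtain ⟨hy0, hy1⟩ := hy
  have hhalf : f (1/2) = 0 := by
    have := hanti (1/2) ⟨by norm_num, by norm_num⟩
    norm_num at this
    linarith
  by_cases hy2 : y ≤ 1/2
  · by_cases hx2 : x ≤ 1/2
    · -- both in Ioc(0,1/2]
      have := hconv.2 (x := x) (y := y) ⟨hx0, hx2⟩ ⟨hy0, hy2⟩
        (by norm_num : (0:ℝ) ≤ 1/2) (by norm_num : (0:ℝ) ≤ 1/2) (by norm_num)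
      simp only [smul_eq_mul] at this
      have heq : (1/2 : ℝ) * x + 1/2 * y = (x + y)/2 := by ring
      rw [heq] at this
      linarith
    · -- x > 1/2, y ≤ 1/2 : swap roles
      push_neg at hx2
      have hb : 1 - x < 1/2 := by linarith
      have hyb : y < 1 - x := by linarith
      have hkey := key_lemma f hconv hhalf y (1 - x) hy0 hyb hb
      have hax := hanti x ⟨hx0, hx1⟩
      have heq : (y + (1 - (1 - x))) / 2 = (x + y) / 2 := by ring
      rw [heq] at hkey
      linarith
  · -- y > 1/2 (so x < 1/2)
    push_neg at hy2
    have hb : 1 - y < 1/2 := by linarith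
    have hxb : x < 1 - y := by linarith
    have hkey := key_lemma f hconv hhalf x (1 - y) hx0 hxb hb
    have hay := hanti y ⟨hy0, hy1⟩
    have heq : (x + (1 - (1 - y))) / 2 = (x + y) / 2 := by ring
    rw [heq] at hkey
    linarith
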